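/- Let M ∈ ℝ^{p×p} be invertible, and suppose vectors θ_n, θ₀ ∈ ℝ^p and Γ_n ∈ ℝ^p satisfy M(θ_n − θ₀) = Γ_n + R_n with ‖R_n‖ ≤ c(‖θ_n − θ₀‖² + δ_n²) for constants c > 0 and δ_n → 0, and additionally ‖θ_n − θ₀‖ → 0 and √n δ_n² → 0 and √n ‖Γ_n‖ = O(1). Then ‖√n(θ_n − θ₀) − M^{-1} √n Γ_n‖ → 0. -/

import Mathlib

open Filter Matrix

/-- Perturbation lemma for the linearization step: if `M(θ_n - θ₀) = Γ_n + R_n` with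
`‖R_n‖ ≤ c(‖θ_n - θ₀‖² + δ_n²)`, `θ_n → θ₀`, `δ_n → 0`, `√n δ_n² → 0`, and
`√n ‖Γ_n‖ = O(1)`, then `‖√n(θ_n - θ₀) - M⁻¹ √n Γ_n‖ → 0`. -/
theorem linearization_perturbation
    {p : ℕ} (M : Matrix (Fin p) (Fin p) ℝ) (hM : IsUnit M.det)
    (θn : ℕ → Fin p → ℝ) (θ0 : Fin p → ℝ)
    (Γn Rn : ℕ → Fin p → ℝ)
    (c : ℝ) (hc : 0 < c) (δ : ℕ → ℝ)
    (heq : ∀ n, M *ᵥ (θn n - θ0) = Γn n + Rn n)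
    (hRbound : ∀ n, ‖Rn n‖ ≤ c * (‖θn n - θ0‖ ^ 2 + (δ n) ^ 2))
    (hθ : Tendsto (fun n : ℕ => ‖θn n - θ0‖) atTop (nhds 0))
    (hδ : Tendsto δ atTop (nhds 0))
    (hδ2 : Tendsto (fun n : ℕ => Real.sqrt (n : ℝ) * (δ n) ^ 2) atTop (nhds 0))
    (hΓ : ∃ C : ℝ, ∀ n : ℕ, Real.sqrt (n : ℝ) * ‖Γn n‖ ≤ C) :
    Tendsto (fun n : ℕ =>
        ‖(Real.sqrt (n : ℝ)) • (θn n - θ0) - (Real.sqrt (n : ℝ)) • (M⁻¹ *ᵥ Γn n)‖)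
      atTop (nhds 0) := by
  classical
  obtain ⟨C, hC⟩ := hΓ
  set g : (Fin p → ℝ) →L[ℝ] (Fin p → ℝ) :=
    LinearMap.toContinuousLinearMap ((M⁻¹).mulVecLin) with hgdef
  have hgapp : ∀ x, g x = M⁻¹ *ᵥ x := fun x => rfl
  set K := ‖g‖ with hKdef
  have hK0 : 0 ≤ K := norm_nonneg g
  have hK : ∀ x, ‖g x‖ ≤ K * ‖x‖ := fun x => g.le_opNorm x
  have hginv : ∀ v, g (M *ᵥ v) = v := by
    intro v
    rw [hgapp, Matrix.mulVec_mulVec, Matrix.nonsing_inv_mul M hM, Matrix.one_mulVec]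
  have hKey : ∀ n, θn n - θ0 = g (Γn n) + g (Rn n) := by
    intro n
    have h1 := hginv (θn n - θ0)
    rw [heq n, map_add] at h1
    exact h1.symm
  set a : ℕ → ℝ := fun n => ‖θn n - θ0‖ with ha
  set s : ℕ → ℝ := fun n => Real.sqrt (n : ℝ) with hs
  have hs0 : ∀ n, 0 ≤ s n := fun n => Real.sqrt_nonneg _
  -- eventual bound on a
  have hEv : ∀ᶠ n in atTop, a n ≤ 2*K*‖Γn n‖ + 2*K*c*(δ n)^2 := by
    have hε : (0:ℝ) < 1/(2*(K*c+1)) := by positivity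
    have hsmall : ∀ᶠ n in atTop, a n < 1/(2*(K*c+1)) := by
      have := hθ.eventually (eventually_lt_nhds hε)
      exact this
    filter_upwards [hsmall] with n hn
    have ha0 : 0 ≤ a n := norm_nonneg _
    have hKca : K*c*a n ≤ 1/2 := by
      have hKc1 : (0:ℝ) < K*c+1 := by positivity
      have h1 : K*c*a n ≤ (K*c+1)*a n := by nlinarith
      have h2 : (K*c+1)*a n ≤ (K*c+1)*(1/(2*(K*c+1))) :=
        mul_le_mul_of_nonneg_left hn.le hKc1.le
      have h3 : (K*c+1)*(1/(2*(K*c+1))) = 1/2 := by field_simp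
      linarith
    have hbound : a n ≤ K*‖Γn n‖ + K*c*(a n^2 + (δ n)^2) := by
      calc a n = ‖g (Γn n) + g (Rn n)‖ := by rw [ha]; simp [hKey n]
        _ ≤ ‖g (Γn n)‖ + ‖g (Rn n)‖ := norm_add_le _ _
        _ ≤ K*‖Γn n‖ + K*‖Rn n‖ := add_le_add (hK _) (hK _)
        _ ≤ K*‖Γn n‖ + K*(c*(a n^2 + (δ n)^2)) := by
            have := hRbound n
            nlinarith [hK0]
        _ = K*‖Γn n‖ + K*c*(a n^2 + (δ n)^2) := by ring
    nlinarith [hKca, ha0]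
  -- step 2 : √n a² → 0
  set C' := max C 0 with hC'
  have hC'0 : 0 ≤ C' := le_max_right _ _
  have hsb : ∀ n, s n * ‖Γn n‖ ≤ C' := fun n => (hC n).trans (le_max_left _ _)
  have hsa2 : Tendsto (fun n => s n * a n ^ 2) atTop (nhds 0) := by
    have hub : ∀ᶠ n in atTop, s n * a n ^ 2 ≤ a n * (2*K*C' + 2*K*c*(s n * (δ n)^2)) := by
      filter_upwards [hEv] with n hn
      have ha0 : 0 ≤ a n := norm_nonneg _
      have h1 : s n * a n ≤ s n * (2*K*‖Γn n‖ + 2*K*c*(δ n)^2) :=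
        mul_le_mul_of_nonneg_left hn (hs0 n)
      have h2 : s n * (2*K*‖Γn n‖ + 2*K*c*(δ n)^2)
          ≤ 2*K*C' + 2*K*c*(s n * (δ n)^2) := by
        have := hsb n
        nlinarith [hK0, hs0 n, norm_nonneg (Γn n), sq_nonneg (δ n)]
      nlinarith [h1, h2, ha0]
    have hlim : Tendsto (fun n => a n * (2*K*C' + 2*K*c*(s n * (δ n)^2))) atTop (nhds 0) := by
      have := hθ.mul (((hδ2.const_mul (2*K*c)).const_add (2*K*C')))
      simpa using this
    refine squeeze_zero' ?_ hub hlim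
    filter_upwards with n
    positivity
  -- step 3 : √n ‖Rn‖ → 0
  have hsR : Tendsto (fun n => s n * ‖Rn n‖) atTop (nhds 0) := by
    have hub : ∀ n, s n * ‖Rn n‖ ≤ c * (s n * a n ^ 2) + c * (s n * (δ n)^2) := by
      intro n
      have := hRbound n
      nlinarith [hs0 n, norm_nonneg (Rn n)]
    have hlim : Tendsto (fun n => c * (s n * a n ^ 2) + c * (s n * (δ n)^2)) atTop (nhds 0) := by
      have := (hsa2.const_mul c).add (hδ2.const_mul c)
      simpa using this
    refine squeeze_zero (fun n => by positivity) hub hlim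
  -- final
  have hexpr : ∀ n, (s n) • (θn n - θ0) - (s n) • (M⁻¹ *ᵥ Γn n) = (s n) • g (Rn n) := by
    intro n
    rw [hKey n, hgapp]
    module
  have hub : ∀ n, ‖(s n) • (θn n - θ0) - (s n) • (M⁻¹ *ᵥ Γn n)‖ ≤ K * (s n * ‖Rn n‖) := by
    intro n
    rw [hexpr n, norm_smul, Real.norm_eq_abs, abs_of_nonneg (hs0 n)]
    have := hK (Rn n)
    nlinarith [hs0 n, norm_nonneg (Rn n)]
  have hlim : Tendsto (fun n => K * (s n * ‖Rn n‖)) atTop (nhds 0) := by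
    simpa using hsR.const_mul K
  exact squeeze_zero (fun n => norm_nonneg _) hub hlim
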